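/- In the two-peakon system with q_1(0) > q_2(0), p_1(0) < 0 < p_2(0), and z = q_1 - q_2, the derivative of z along the flow satisfies ż = (1 - exp(-z))(p_1 - p_2), and along solutions with p_1 < 0 < p_2 and z > 0 one has ż ≤ -√(1 - exp(-z)) · √((1 + exp(-z))(2H_1 - H_0²)), where H_0 = p_1 + p_2 and H_1 = (1/2)(p_1² + p_2² + 2p_1p_2 exp(-z)). -/

import Mathlib

/-- For the two-peakon Hamiltonian system (`q̇₁ = ∂H₁/∂p₁`, `q̇₂ = ∂H₁/∂p₂` in the
region `q₁ > q₂`), setting `z = q₁ - q₂`, the derivative of `z` along the flow is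
`ż = (1 - exp(-z))(p₁ - p₂)`, and when `p₁ < 0 < p₂` this satisfies
`ż ≤ -√(1 - exp(-z)) · √((1 + exp(-z))(2H₁ - H₀²))`. -/
theorem twopeakon_z_derivative_estimate (q₁ q₂ p₁ p₂ : ℝ → ℝ)
    (horder : ∀ t, q₁ t > q₂ t)
    (hsign : ∀ t, p₁ t < 0 ∧ 0 < p₂ t)
    (hq₁ : ∀ t, HasDerivAt q₁ (p₁ t + p₂ t * Real.exp (-(q₁ t - q₂ t))) t)
    (hq₂ : ∀ t, HasDerivAt q₂ (p₂ t + p₁ t * Real.exp (-(q₁ t - q₂ t))) t) :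
    ∀ t : ℝ,
      HasDerivAt (fun s => q₁ s - q₂ s)
        ((1 - Real.exp (-(q₁ t - q₂ t))) * (p₁ t - p₂ t)) t ∧
      (1 - Real.exp (-(q₁ t - q₂ t))) * (p₁ t - p₂ t) ≤
        -(Real.sqrt (1 - Real.exp (-(q₁ t - q₂ t))) *
          Real.sqrt ((1 + Real.exp (-(q₁ t - q₂ t))) *
            (2 * ((1/2) * ((p₁ t)^2 + (p₂ t)^2
                + 2 * p₁ t * p₂ t * Real.exp (-(q₁ t - q₂ t))))
              - (p₁ t + p₂ t)^2))) := by
  intro t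
  obtain ⟨hp1, hp2⟩ := hsign t
  set a : ℝ := Real.exp (-(q₁ t - q₂ t)) with ha
  have ha0 : 0 < a := Real.exp_pos _
  have ha1 : a < 1 := by
    rw [ha]
    have : -(q₁ t - q₂ t) < 0 := by linarith [horder t]
    calc Real.exp (-(q₁ t - q₂ t)) < Real.exp 0 := Real.exp_lt_exp.mpr this
      _ = 1 := Real.exp_zero
  constructor
  · have h := (hq₁ t).sub (hq₂ t)
    exact h.congr_deriv (by rw [ha]; ring)
  · set E : ℝ := 2 * ((1/2) * ((p₁ t)^2 + (p₂ t)^2 + 2 * p₁ t * p₂ t * a))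
      - (p₁ t + p₂ t)^2 with hE
    have hkey : (1 + a) * (-(2 * p₁ t * p₂ t)) ≤ (p₂ t - p₁ t)^2 := by
      have h1 : 0 ≤ -(2 * p₁ t * p₂ t) := by nlinarith [mul_pos (neg_pos.mpr hp1) hp2]
      have h2 : a * (-(2 * p₁ t * p₂ t)) ≤ 1 * (-(2 * p₁ t * p₂ t)) :=
        mul_le_mul_of_nonneg_right ha1.le h1
      nlinarith [sq_nonneg (p₁ t + p₂ t)]
    have hprod : (1 - a) * ((1 + a) * E) ≤ ((1 - a) * (p₂ t - p₁ t))^2 := by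
      have hEeq : (1 - a) * ((1 + a) * E)
          = (1 - a)^2 * ((1 + a) * (-(2 * p₁ t * p₂ t))) := by rw [hE]; ring
      rw [hEeq]
      calc (1 - a)^2 * ((1 + a) * (-(2 * p₁ t * p₂ t)))
          ≤ (1 - a)^2 * (p₂ t - p₁ t)^2 :=
            mul_le_mul_of_nonneg_left hkey (sq_nonneg (1 - a))
        _ = ((1 - a) * (p₂ t - p₁ t))^2 := by ring
    have hnn : 0 ≤ (1 - a) * (p₂ t - p₁ t) := by nlinarith
    have hs : Real.sqrt ((1 - a) * ((1 + a) * E)) ≤ (1 - a) * (p₂ t - p₁ t) := by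
      calc Real.sqrt ((1 - a) * ((1 + a) * E))
          ≤ Real.sqrt (((1 - a) * (p₂ t - p₁ t))^2) := Real.sqrt_le_sqrt hprod
        _ = (1 - a) * (p₂ t - p₁ t) := Real.sqrt_sq hnn
    have hsplit : Real.sqrt (1 - a) * Real.sqrt ((1 + a) * E)
        = Real.sqrt ((1 - a) * ((1 + a) * E)) :=
      (Real.sqrt_mul (by linarith) _).symm
    have : (1 - a) * (p₁ t - p₂ t) = -((1 - a) * (p₂ t - p₁ t)) := by ring
    rw [this, hsplit]
    exact neg_le_neg hs
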